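/- arXiv:quant-ph/0010076 — 5 statements merged into one kernel-verified Lean document; each statement's English description precedes it below -/
import Mathlib

section
/- Let E be a finite group with E' ⊆ Z(E) (nilpotent of class at most 2), and let N ⊴ E. If χ is an irreducible complex character of N that is faithful on Z(E) ∩ N, then the support of χ equals the center of N: {n ∈ N | χ(n) ≠ 0} = Z(N). -/
open scoped BigOperators

/-- A representation is irreducible if it is nonzero and has no proper nontrivial
invariant subspaces. -/
def RepIrreducible {G V : Type*} [Monoid G] [AddCommGroup V] [Module ℂ V]
    (ρ : Representation ℂ G V) : Prop :=
  (⊤ : Submodule ℂ V) ≠ ⊥ ∧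
    ∀ U : Submodule ℂ V, (∀ g v, v ∈ U → ρ g v ∈ U) → U = ⊥ ∨ U = ⊤

/-- The character of a representation. -/
noncomputable def repChar {G V : Type*} [Monoid G] [AddCommGroup V] [Module ℂ V]
    (ρ : Representation ℂ G V) (g : G) : ℂ := LinearMap.trace ℂ V (ρ g)

lemma rep_nontrivial {V : Type*} [AddCommGroup V] [Module ℂ V]
    (h : (⊤ : Submodule ℂ V) ≠ ⊥) : Nontrivial V := by
  by_contra hc
  rw [not_nontrivial_iff_subsingleton] at hc
  haveI : Subsingleton (Submodule ℂ V) := (Submodule.subsingleton_iff ℂ).mpr hc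
  exact h (Subsingleton.elim _ _)

lemma schur_aux {G V : Type*} [Monoid G] [AddCommGroup V] [Module ℂ V]
    [FiniteDimensional ℂ V] (ρ : Representation ℂ G V)
    (hirr : RepIrreducible ρ) (f : Module.End ℂ V)
    (hf : ∀ g v, f (ρ g v) = ρ g (f v)) :
    ∃ μ : ℂ, ∀ v, f v = μ • v := by
  haveI := rep_nontrivial hirr.1
  obtain ⟨μ, hμ⟩ := Module.End.exists_eigenvalue f
  refine ⟨μ, ?_⟩
  have hinv : ∀ g v, v ∈ f.eigenspace μ → ρ g v ∈ f.eigenspace μ := by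
    intro g v hv
    rw [Module.End.mem_eigenspace_iff] at hv ⊢
    rw [hf, hv, map_smul]
  rcases hirr.2 _ hinv with h | h
  · exact absurd h hμ
  · intro v
    have hv : v ∈ f.eigenspace μ := h ▸ Submodule.mem_top
    exact Module.End.mem_eigenspace_iff.mp hv

/-- If `E' ⊆ Z(E)`, `N ⊴ E`, and `χ ∈ Irr(N)` is faithful on
`Z(E) ∩ N`, then the support of `χ` is exactly the center `Z(N)`. -/
theorem support_of_char_eq_center
    {E V : Type*} [Group E] [Finite E]
    [AddCommGroup V] [Module ℂ V] [FiniteDimensional ℂ V]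
    (hE : commutator E ≤ Subgroup.center E)
    (N : Subgroup E) [N.Normal]
    (ρ : Representation ℂ ↥N V) (hirr : RepIrreducible ρ)
    (χ : ↥N → ℂ) (hχ : χ = repChar ρ)
    (hfaith : ∀ z : E, z ∈ Subgroup.center E → ∀ hz : z ∈ N,
      χ ⟨z, hz⟩ = χ 1 → z = 1) :
    ∀ n : ↥N, χ n ≠ 0 ↔ n ∈ Subgroup.center ↥N := by
  subst hχ
  haveI := rep_nontrivial hirr.1
  have hd0 : ((Module.finrank ℂ V : ℂ)) ≠ 0 :=
    Nat.cast_ne_zero.mpr (Module.finrank_pos).ne'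
  have hχ1 : repChar ρ 1 = (Module.finrank ℂ V : ℂ) := by
    rw [repChar, map_one, LinearMap.trace_one]
  have hscal : ∀ c : ↥N, (∀ g : ↥N, g * c = c * g) →
      ∃ μ : ℂ, ∀ v, ρ c v = μ • v := by
    intro c hc
    refine schur_aux ρ hirr (ρ c) ?_
    intro g v
    have h : ρ c * ρ g = ρ g * ρ c := by
      rw [← map_mul, ← map_mul, ← hc g]
    calc ρ c (ρ g v) = (ρ c * ρ g) v := rfl
      _ = (ρ g * ρ c) v := by rw [h]
      _ = ρ g (ρ c v) := rfl
  intro n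
  constructor
  · intro hn
    rw [Subgroup.mem_center_iff]
    intro m
    set c : ↥N := n⁻¹ * m⁻¹ * n * m with hcdef
    have hcZ : (c : E) ∈ Subgroup.center E := by
      apply hE
      open scoped commutatorElement in
      have hce : (c : E) = ⁅(n : E)⁻¹, (m : E)⁻¹⁆ := by
        simp [hcdef, commutatorElement_def, mul_assoc]
      rw [hce, commutator_def]
      exact Subgroup.commutator_mem_commutator (Subgroup.mem_top _) (Subgroup.mem_top _)
    have hcomm : ∀ g : ↥N, g * c = c * g := by
      intro g
      exact Subtype.ext (Subgroup.mem_center_iff.mp hcZ (g : E))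
    obtain ⟨μ, hμ⟩ := hscal c hcomm
    have h1 : repChar ρ (n * c) = μ * repChar ρ n := by
      have hnc : ρ (n * c) = μ • ρ n := by
        ext v
        simp only [map_mul, Module.End.mul_apply, LinearMap.smul_apply]
        rw [hμ v, map_smul]
      rw [repChar, hnc, map_smul, smul_eq_mul, repChar]
    have h2 : repChar ρ (n * c) = repChar ρ n := by
      have hrw : n * c = m⁻¹ * (n * m) := by
        rw [hcdef]; group
      rw [repChar, hrw, map_mul, LinearMap.trace_mul_comm, ← map_mul]
      have : n * m * m⁻¹ = n := by group
      rw [this, repChar]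
    have hμ1 : μ = 1 := by
      have h3 : μ * repChar ρ n = 1 * repChar ρ n := by
        rw [one_mul, ← h1, h2]
      exact mul_right_cancel₀ hn h3
    have hχc : repChar ρ c = repChar ρ 1 := by
      have hcid : ρ c = LinearMap.id := by
        ext v; rw [hμ v, hμ1, one_smul]; rfl
      rw [hχ1, repChar, hcid, LinearMap.trace_id]
    have hc1 : (c : E) = 1 := hfaith (c : E) hcZ c.2 hχc
    have hcN : c = 1 := Subtype.ext (by simpa using hc1)
    have h4 : n⁻¹ * (m⁻¹ * (n * m)) = 1 := by
      rw [← mul_assoc, ← mul_assoc]; exact hcN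
    have h5 : n = m⁻¹ * (n * m) := inv_mul_eq_one.mp h4
    exact (eq_inv_mul_iff_mul_eq.mp h5).symm ▸ rfl
  · intro hn
    obtain ⟨μ, hμ⟩ := hscal n (fun g => Subgroup.mem_center_iff.mp hn g)
    have hμ0 : μ ≠ 0 := by
      intro h0
      obtain ⟨v, hv⟩ := exists_ne (0 : V)
      have hρn : ρ n v = 0 := by rw [hμ v, h0, zero_smul]
      have : v = 0 := by
        calc v = ρ (n⁻¹ * n) v := by simp
          _ = ρ n⁻¹ (ρ n v) := by rw [map_mul]; rfl
          _ = 0 := by rw [hρn, map_zero]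
      exact hv this
    have hval : repChar ρ n = μ * (Module.finrank ℂ V : ℂ) := by
      have hρn : ρ n = μ • LinearMap.id := by
        ext v; simp [hμ v]
      rw [repChar, hρn, map_smul, LinearMap.trace_id, smul_eq_mul]
    rw [hval]
    exact mul_ne_zero hμ0 hd0
end

section
/- Let E be a finite group with E' ⊆ Z(E), N ⊴ E, φ ∈ Irr(E) faithful on Z(E), and χ an irreducible constituent of φ↓N. Then the inertia group of χ in E equals the centralizer of Z(N) in E: T(χ) = C_E(Z(N)). -/
open scoped BigOperators
open scoped commutatorElement

/-- Conjugation by `g ∈ E` as an automorphism of a normal subgroup `N`. -/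
def conjHom {E : Type*} [Group E] (N : Subgroup E) [hN : N.Normal] (g : E) : ↥N →* ↥N where
  toFun x := ⟨g * ↑x * g⁻¹, hN.conj_mem _ x.2 g⟩
  map_one' := by ext; simp
  map_mul' a b := by ext; push_cast; group

lemma schur_scalar {G V : Type*} [Group G] [AddCommGroup V] [Module ℂ V]
    [FiniteDimensional ℂ V]
    (ρ : Representation ℂ G V)
    (hirr : (⊤ : Submodule ℂ V) ≠ ⊥ ∧
      ∀ U : Submodule ℂ V, (∀ g v, v ∈ U → ρ g v ∈ U) → U = ⊥ ∨ U = ⊤)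
    (f : Module.End ℂ V) (hf : ∀ g : G, f * ρ g = ρ g * f) :
    ∃ c : ℂ, f = c • (1 : Module.End ℂ V) := by
  haveI : Nontrivial V := by
    by_contra h
    rw [not_nontrivial_iff_subsingleton] at h
    exact hirr.1 (Subsingleton.elim _ _)
  obtain ⟨c, hc⟩ := Module.End.exists_eigenvalue f
  refine ⟨c, ?_⟩
  have hinv : ∀ g v, v ∈ Module.End.eigenspace f c → ρ g v ∈ Module.End.eigenspace f c := by
    intro g v hv
    rw [Module.End.mem_eigenspace_iff] at hv ⊢
    have := congrArg (fun m : Module.End ℂ V => m v) (hf g)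
    simp only [Module.End.mul_apply] at this
    rw [this, hv, map_smul]
  rcases hirr.2 _ hinv with h | h
  · exact (hc (by simpa [Module.End.eigenspace] using h)).elim
  · ext v
    have : v ∈ Module.End.eigenspace f c := h ▸ Submodule.mem_top
    rw [Module.End.mem_eigenspace_iff] at this
    simpa using this


/-- **"Tacheles" Lemma.** If `E' ⊆ Z(E)`, `φ ∈ Irr(E)` is faithful on
`Z(E)`, and `χ` is an irreducible constituent of `φ↓N`, then the inertia group of `χ`
in `E` is the centralizer of `Z(N)` in `E`. -/
theorem inertia_eq_centralizer
    {E V W : Type*} [Group E] [Fintype E]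
    [AddCommGroup V] [Module ℂ V] [FiniteDimensional ℂ V]
    [AddCommGroup W] [Module ℂ W] [FiniteDimensional ℂ W]
    (hE : commutator E ≤ Subgroup.center E)
    (N : Subgroup E) [N.Normal] [Fintype ↥N]
    (σ : Representation ℂ E V) (hσirr : RepIrreducible σ)
    (φ : E → ℂ) (hφ : φ = repChar σ)
    (hfaith : ∀ z : E, z ∈ Subgroup.center E → φ z = φ 1 → z = 1)
    (ρ : Representation ℂ ↥N W) (hρirr : RepIrreducible ρ)
    (χ : ↥N → ℂ) (hχ : χ = repChar ρ)
    (hconst : (Fintype.card ↥N : ℂ)⁻¹ * ∑ n : ↥N, χ n * φ ((n⁻¹ : ↥N) : E) ≠ 0) :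
    ∀ g : E, (∀ x : ↥N, χ (conjHom N g x) = χ x) ↔
      g ∈ Subgroup.centralizer (((Subgroup.center ↥N).map N.subtype : Subgroup E) : Set E) := by
  subst hφ hχ
  haveI hVnt : Nontrivial V := by
    by_contra h
    rw [not_nontrivial_iff_subsingleton] at h
    exact hσirr.1 (Subsingleton.elim _ _)
  haveI hWnt : Nontrivial W := by
    by_contra h
    rw [not_nontrivial_iff_subsingleton] at h
    exact hρirr.1 (Subsingleton.elim _ _)
  -- scalars for central elements of E under σ
  have hσs : ∀ z : E, z ∈ Subgroup.center E → ∃ w : ℂ, σ z = w • (1 : Module.End ℂ V) := by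
    intro z hz
    exact schur_scalar σ hσirr (σ z) (fun g => by
      rw [← map_mul, ← map_mul, (Subgroup.mem_center_iff.mp hz g).symm])
  -- scalars for central elements of N under ρ
  have hρs : ∀ x : ↥N, (∀ y : ↥N, y * x = x * y) → ∃ l : ℂ, ρ x = l • (1 : Module.End ℂ W) := by
    intro x hx
    exact schur_scalar ρ hρirr (ρ x) (fun y => by
      rw [← map_mul, ← map_mul, (hx y).symm])
  -- character multiplication by central scalar
  have hχmul : ∀ (x c : ↥N) (l : ℂ), ρ c = l • (1 : Module.End ℂ W) →
      repChar ρ (x * c) = l * repChar ρ x := by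
    intro x c l hl
    simp only [repChar, map_mul, hl, mul_smul_comm, mul_one, map_smul, smul_eq_mul]
  -- key: scalar under ρ equals scalar under σ for elements of N central in E
  have hkey : ∀ (c : ↥N) (l w : ℂ), ρ c = l • (1 : Module.End ℂ W) →
      σ (c : E) = w • (1 : Module.End ℂ V) → l = w := by
    intro c l w hl hw
    set S := ∑ n : ↥N, repChar ρ n * repChar σ ((n⁻¹ : ↥N) : E) with hSdef
    have hS : S ≠ 0 := fun h => hconst (by rw [h, mul_zero])
    have h1 : S = ∑ n : ↥N, repChar ρ (n * c) * repChar σ (((n * c)⁻¹ : ↥N) : E) :=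
      (Fintype.sum_equiv (Equiv.mulRight c)
        (fun n => repChar ρ (n * c) * repChar σ (((n * c)⁻¹ : ↥N) : E))
        (fun n => repChar ρ n * repChar σ ((n⁻¹ : ↥N) : E)) (fun n => rfl)).symm
    have hterm : ∀ n : ↥N,
        w * (repChar ρ (n * c) * repChar σ (((n * c)⁻¹ : ↥N) : E)) =
        l * (repChar ρ n * repChar σ ((n⁻¹ : ↥N) : E)) := by
      intro n
      have e1 : repChar ρ (n * c) = l * repChar ρ n := hχmul n c l hl
      have e2 : w * repChar σ (((n * c)⁻¹ : ↥N) : E) = repChar σ ((n⁻¹ : ↥N) : E) := by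
        have hcomp : σ (c : E) * σ (((n * c)⁻¹ : ↥N) : E) = σ ((n⁻¹ : ↥N) : E) := by
          rw [← map_mul]
          congr 1
          push_cast
          group
        calc w * repChar σ (((n * c)⁻¹ : ↥N) : E)
            = LinearMap.trace ℂ V (σ (c : E) * σ (((n * c)⁻¹ : ↥N) : E)) := by
              rw [hw]; simp [repChar, smul_mul_assoc, map_smul, smul_eq_mul]
          _ = repChar σ ((n⁻¹ : ↥N) : E) := by rw [hcomp]; rfl
      rw [e1]
      calc w * (l * repChar ρ n * repChar σ (((n * c)⁻¹ : ↥N) : E))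
          = l * (repChar ρ n * (w * repChar σ (((n * c)⁻¹ : ↥N) : E))) := by ring
        _ = l * (repChar ρ n * repChar σ ((n⁻¹ : ↥N) : E)) := by rw [e2]
    have hws : w * S = l * S := by
      calc w * S = ∑ n : ↥N, w * (repChar ρ (n * c) * repChar σ (((n * c)⁻¹ : ↥N) : E)) := by
            rw [h1, Finset.mul_sum]
        _ = ∑ n : ↥N, l * (repChar ρ n * repChar σ ((n⁻¹ : ↥N) : E)) :=
            Finset.sum_congr rfl (fun n _ => hterm n)
        _ = l * S := by rw [hSdef, Finset.mul_sum]
    exact (mul_right_cancel₀ hS hws).symm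
  -- faithfulness transferred to N
  have hcen : ∀ c : ↥N, (c : E) ∈ Subgroup.center E →
      ∃ l : ℂ, ρ c = l • (1 : Module.End ℂ W) ∧ (l = 1 → c = 1) := by
    intro c hc
    obtain ⟨l, hl⟩ := hρs c (fun y => Subtype.ext (Subgroup.mem_center_iff.mp hc (y : E)))
    refine ⟨l, hl, fun h1 => ?_⟩
    obtain ⟨w, hw⟩ := hσs (c : E) hc
    have hw1 : w = 1 := by rw [← hkey c l w hl hw, h1]
    have : repChar σ (c : E) = repChar σ (1 : E) := by
      simp [repChar, hw, hw1, map_one]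
    have hcE : (c : E) = 1 := hfaith (c : E) hc this
    exact Subtype.ext hcE
  -- class function property
  have hχclass : ∀ x y : ↥N, repChar ρ (y * x * y⁻¹) = repChar ρ x := by
    intro x y
    have : ρ (y * x * y⁻¹) = (ρ y * ρ x) * ρ y⁻¹ := by simp [map_mul, mul_assoc]
    rw [repChar, this, LinearMap.trace_mul_comm, ← map_mul, ← map_mul,
      inv_mul_cancel_left]
    rfl
  -- χ is nonzero on the center of N
  have hχne : ∀ x : ↥N, x ∈ Subgroup.center ↥N → repChar ρ x ≠ 0 := by
    intro x hx
    obtain ⟨l, hl⟩ := hρs x (fun y => Subgroup.mem_center_iff.mp hx y)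
    have hl0 : l ≠ 0 := by
      intro h0
      have h1 : ρ x * ρ x⁻¹ = 1 := by rw [← map_mul, mul_inv_cancel, map_one]
      rw [hl, h0, zero_smul, zero_mul] at h1
      obtain ⟨v, hv⟩ := exists_ne (0 : W)
      exact hv (by have := congrArg (fun m : Module.End ℂ W => m v) h1; simpa using this.symm)
    rw [repChar, hl, map_smul, smul_eq_mul, LinearMap.trace_one]
    exact mul_ne_zero hl0 (Nat.cast_ne_zero.mpr (Module.finrank_pos).ne')
  -- χ vanishes off the center of N
  have hsupp : ∀ x : ↥N, x ∉ Subgroup.center ↥N → repChar ρ x = 0 := by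
    intro x hx
    rw [Subgroup.mem_center_iff] at hx
    push_neg at hx
    obtain ⟨y, hy⟩ := hx
    set c : ↥N := x⁻¹ * (y * x * y⁻¹) with hcdef
    have hcE : (c : E) ∈ Subgroup.center E := by
      apply hE
      have hc : (c : E) = ⁅((x : E))⁻¹, ((y : ↥N) : E)⁆ := by
        rw [hcdef, commutatorElement_def]
        push_cast
        group
      rw [hc, commutator_def]
      exact Subgroup.commutator_mem_commutator (Subgroup.mem_top _) (Subgroup.mem_top _)
    obtain ⟨l, hl, hl1⟩ := hcen c hcE
    have hne : l ≠ 1 := by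
      intro h1
      apply hy
      have hc1 : c = 1 := hl1 h1
      have : y * x * y⁻¹ = x := by
        have := hc1
        rw [hcdef] at this
        rw [inv_mul_eq_one] at this
        exact this.symm
      calc y * x = (y * x * y⁻¹) * y := by group
        _ = x * y := by rw [this]
    have hxc : y * x * y⁻¹ = x * c := by rw [hcdef]; group
    have heq : repChar ρ x = l * repChar ρ x := by
      conv_lhs => rw [← hχclass x y, hxc, hχmul x c l hl]
    by_contra h0
    exact hne (mul_right_cancel₀ h0 (by rw [one_mul]; exact heq)).symm
  -- main equivalence
  intro g
  constructor
  · intro hinv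
    rw [Subgroup.mem_centralizer_iff]
    rintro _ ⟨z, hz, rfl⟩
    set c : ↥N := (conjHom N g z) * z⁻¹ with hcdef
    have hcE : (c : E) ∈ Subgroup.center E := by
      apply hE
      have hc : (c : E) = ⁅g, ((z : ↥N) : E)⁆ := by
        rw [commutatorElement_def]
        show (g * (z : E) * g⁻¹) * ((z : E))⁻¹ = _
        group
      rw [hc, commutator_def]
      exact Subgroup.commutator_mem_commutator (Subgroup.mem_top _) (Subgroup.mem_top _)
    obtain ⟨l, hl, hl1⟩ := hcen c hcE
    have hzc : conjHom N g z = z * c := by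
      apply Subtype.ext
      have hcomm : (z : E) * (c : E) = (c : E) * (z : E) :=
        (Subgroup.mem_center_iff.mp hcE (z : E))
      show g * (z : E) * g⁻¹ = (z : E) * (c : E)
      rw [hcomm]
      show g * (z : E) * g⁻¹ = ((g * (z : E) * g⁻¹) * ((z : E))⁻¹) * (z : E)
      group
    have h2 : l * repChar ρ z = repChar ρ z := by
      rw [← hχmul z c l hl, ← hzc]
      exact hinv z
    have hl' : l = 1 := mul_right_cancel₀ (hχne z hz) (by rw [one_mul]; exact h2)
    have hc1 : c = 1 := hl1 hl'
    have : (c : E) = 1 := by rw [hc1]; rfl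
    have hgz : g * (z : E) * g⁻¹ * ((z : E))⁻¹ = 1 := this
    show N.subtype z * g = g * N.subtype z
    have : g * (z : E) = (z : E) * g := by
      have h := hgz
      rw [mul_inv_eq_one] at h
      calc g * (z : E) = (g * (z : E) * g⁻¹) * g := by group
        _ = (z : E) * g := by rw [h]
    simpa [Subgroup.coe_subtype] using this.symm
  · intro hg x
    by_cases hx : x ∈ Subgroup.center ↥N
    · have hcomm : (x : E) * g = g * (x : E) :=
        Subgroup.mem_centralizer_iff.mp hg _ ⟨x, hx, rfl⟩
      have : conjHom N g x = x := by
        apply Subtype.ext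
        show g * (x : E) * g⁻¹ = (x : E)
        rw [← hcomm]
        group
      rw [this]
    · set c : ↥N := x⁻¹ * (conjHom N g x) with hcdef
      have hcE : (c : E) ∈ Subgroup.center E := by
        apply hE
        have hc : (c : E) = ⁅((x : E))⁻¹, g⁆ := by
          rw [hcdef, commutatorElement_def]
          push_cast
          rw [show (((conjHom N g) x : ↥N) : E) = g * (x : E) * g⁻¹ from rfl]
          group
        rw [hc, commutator_def]
        exact Subgroup.commutator_mem_commutator (Subgroup.mem_top _) (Subgroup.mem_top _)
      obtain ⟨l, hl, _⟩ := hcen c hcE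
      have hxc : conjHom N g x = x * c := by rw [hcdef]; group
      rw [hxc, hχmul x c l hl, hsupp x hx, mul_zero]
end

section
/- Let E be a finite group with E' ⊆ Z(E) and cyclic center Z(E). If φ ∈ Irr(E) is faithful, then the inertia group in E of any irreducible constituent χ of φ↓N, for N ⊴ E, equals the inertia group of the linear character φ_Z of Z(N) defined by χ↓Z(N) = χ(1)·φ_Z; in particular T(χ) = T(φ_Z) = C_E(Z(N)). -/
open scoped BigOperators

lemma nontrivial_of_repIrr {G U : Type*} [Monoid G] [AddCommGroup U] [Module ℂ U]
    (τ : Representation ℂ G U) (hirr : RepIrreducible τ) : Nontrivial U := by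
  by_contra h
  rw [not_nontrivial_iff_subsingleton] at h
  exact hirr.1 (Subsingleton.elim _ _)

lemma schur_scalar_s12 {G U : Type*} [Monoid G] [AddCommGroup U] [Module ℂ U]
    [FiniteDimensional ℂ U] (τ : Representation ℂ G U) (hirr : RepIrreducible τ)
    (c : G) (hc : ∀ h : G, c * h = h * c) :
    ∃ μ : ℂ, ∀ v : U, τ c v = μ • v := by
  have hnt : Nontrivial U := nontrivial_of_repIrr τ hirr
  obtain ⟨μ, hμ⟩ := Module.End.exists_eigenvalue (τ c : Module.End ℂ U)
  refine ⟨μ, ?_⟩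
  have hinv : ∀ g v, v ∈ Module.End.eigenspace (τ c) μ →
      τ g v ∈ Module.End.eigenspace (τ c) μ := by
    intro g v hv
    rw [Module.End.mem_eigenspace_iff] at hv ⊢
    have hcomm : τ c (τ g v) = τ g (τ c v) := by
      rw [← Module.End.mul_apply, ← map_mul, hc, map_mul, Module.End.mul_apply]
    rw [hcomm, hv, map_smul]
  rcases hirr.2 _ hinv with h | h
  · exact absurd h hμ
  · intro v
    have hv : v ∈ Module.End.eigenspace (τ c) μ := h ▸ Submodule.mem_top
    exact Module.End.mem_eigenspace_iff.mp hv

lemma repChar_mul_left_of_scalar {G U : Type*} [Monoid G] [AddCommGroup U] [Module ℂ U]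
    [FiniteDimensional ℂ U] (τ : Representation ℂ G U) {c : G} {μ : ℂ}
    (hsc : ∀ v : U, τ c v = μ • v) (x : G) :
    repChar τ (c * x) = μ * repChar τ x := by
  have h : τ (c * x) = μ • τ x := by
    ext v
    rw [map_mul]
    simp [Module.End.mul_apply, hsc]
  rw [repChar, h, map_smul, smul_eq_mul, repChar]

lemma repChar_mul_right_of_scalar {G U : Type*} [Monoid G] [AddCommGroup U] [Module ℂ U]
    [FiniteDimensional ℂ U] (τ : Representation ℂ G U) {c : G} {μ : ℂ}
    (hsc : ∀ v : U, τ c v = μ • v) (x : G) :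
    repChar τ (x * c) = μ * repChar τ x := by
  have h : τ (x * c) = μ • τ x := by
    ext v
    rw [map_mul]
    simp [Module.End.mul_apply, hsc, map_smul]
  rw [repChar, h, map_smul, smul_eq_mul, repChar]

lemma repChar_one_ne_zero {G U : Type*} [Monoid G] [AddCommGroup U] [Module ℂ U]
    [FiniteDimensional ℂ U] (τ : Representation ℂ G U) (hirr : RepIrreducible τ) :
    repChar τ 1 ≠ 0 := by
  have hnt : Nontrivial U := nontrivial_of_repIrr τ hirr
  rw [repChar, map_one, LinearMap.trace_one]
  exact_mod_cast (Module.finrank_pos (R := ℂ) (M := U)).ne'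

lemma repChar_conj {G U : Type*} [Group G] [AddCommGroup U] [Module ℂ U]
    [FiniteDimensional ℂ U] (τ : Representation ℂ G U) (n x : G) :
    repChar τ (n * x * n⁻¹) = repChar τ x := by
  rw [repChar, repChar, map_mul, LinearMap.trace_mul_comm, ← map_mul, inv_mul_cancel_left]


/-- For `E` with `E' ⊆ Z(E)` and cyclic center, `φ ∈ Irr(E)` faithful,
`N ⊴ E`, and `χ` an irreducible constituent of `φ↓N`, the inertia group of `χ` equals
the inertia group of the linear character `φ_Z` of `Z(N)` with `χ↓Z(N) = χ(1)·φ_Z`,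
and both equal `C_E(Z(N))`. -/
theorem inertia_chi_eq_inertia_linear
    {E V W : Type*} [Group E] [Fintype E]
    [AddCommGroup V] [Module ℂ V] [FiniteDimensional ℂ V]
    [AddCommGroup W] [Module ℂ W] [FiniteDimensional ℂ W]
    (hE : commutator E ≤ Subgroup.center E)
    (hcyc : IsCyclic ↥(Subgroup.center E))
    (σ : Representation ℂ E V) (hσirr : RepIrreducible σ)
    (φ : E → ℂ) (hφ : φ = repChar σ)
    (hfaith : ∀ g : E, φ g = φ 1 → g = 1)
    (N : Subgroup E) [N.Normal] [Fintype ↥N]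
    (ρ : Representation ℂ ↥N W) (hρirr : RepIrreducible ρ)
    (χ : ↥N → ℂ) (hχ : χ = repChar ρ)
    (hconst : (Fintype.card ↥N : ℂ)⁻¹ * ∑ n : ↥N, χ n * φ ((n⁻¹ : ↥N) : E) ≠ 0)
    (M : Subgroup E) (hM : M = (Subgroup.center ↥N).map N.subtype)
    (φZ : ↥M →* ℂ)
    (hφZ : ∀ (z : ↥M) (hz : (z : E) ∈ N), χ ⟨(z : E), hz⟩ = χ 1 * φZ z) :
    ∀ g : E,
      ((∀ x : ↥N, χ (conjHom N g x) = χ x) ↔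
        (∀ (z : ↥M) (h2 : g * (z : E) * g⁻¹ ∈ M), φZ ⟨g * (z : E) * g⁻¹, h2⟩ = φZ z)) ∧
      ((∀ x : ↥N, χ (conjHom N g x) = χ x) ↔ g ∈ Subgroup.centralizer (M : Set E)) := by
  subst hφ hχ hM
  have hχ1 : repChar ρ 1 ≠ 0 := repChar_one_ne_zero ρ hρirr
  have hVnt : Nontrivial V := nontrivial_of_repIrr σ hσirr
  -- faithfulness of σ
  have factFaith : ∀ c : E, (∀ v : V, σ c v = v) → c = 1 := by
    intro c h
    apply hfaith
    have hc1 : σ c = 1 := LinearMap.ext fun v => h v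
    rw [repChar, repChar, map_one, hc1]
  -- center transfer
  have hcen : ∀ c : ↥N, (c : E) ∈ Subgroup.center E → c ∈ Subgroup.center ↥N := by
    intro c hc
    rw [Subgroup.mem_center_iff] at hc ⊢
    intro y
    exact Subtype.ext (hc (y : E))
  have memM : ∀ (e : E) (he : e ∈ N), (⟨e, he⟩ : ↥N) ∈ Subgroup.center ↥N →
      e ∈ (Subgroup.center ↥N).map N.subtype := by
    intro e he hc
    exact Subgroup.mem_map.mpr ⟨⟨e, he⟩, hc, rfl⟩
  -- φZ never vanishes
  have hφZne : ∀ z : ↥((Subgroup.center ↥N).map N.subtype), φZ z ≠ 0 := by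
    intro z
    have h1 : φZ z * φZ z⁻¹ = 1 := by rw [← map_mul, mul_inv_cancel, map_one]
    exact left_ne_zero_of_mul_eq_one h1
  -- Fact A : central elements scale χ by φZ
  have factA : ∀ (c : ↥N) (hc : c ∈ Subgroup.center ↥N) (x : ↥N),
      repChar ρ (c * x) =
        φZ ⟨(c : E), Subgroup.mem_map_of_mem _ hc⟩ * repChar ρ x := by
    intro c hc x
    obtain ⟨μ, hμ⟩ := schur_scalar_s12 ρ hρirr c
      (fun h => (Subgroup.mem_center_iff.mp hc h).symm)
    have h2 : repChar ρ c = μ * repChar ρ 1 := by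
      simpa using repChar_mul_left_of_scalar ρ hμ 1
    have h3 : repChar ρ c = repChar ρ 1 * φZ ⟨(c : E), Subgroup.mem_map_of_mem _ hc⟩ :=
      hφZ ⟨(c : E), Subgroup.mem_map_of_mem _ hc⟩ c.2
    have hμφ : μ = φZ ⟨(c : E), Subgroup.mem_map_of_mem _ hc⟩ := by
      have h4 : repChar ρ 1 * μ = repChar ρ 1 *
          φZ ⟨(c : E), Subgroup.mem_map_of_mem _ hc⟩ := by
        rw [mul_comm, ← h2, h3]
      exact mul_left_cancel₀ hχ1 h4
    rw [repChar_mul_left_of_scalar ρ hμ x, hμφ]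
  -- χ at central elements is nonzero
  have hχcne : ∀ (c : ↥N), c ∈ Subgroup.center ↥N → repChar ρ c ≠ 0 := by
    intro c hc
    have h3 : repChar ρ c = repChar ρ 1 * φZ ⟨(c : E), Subgroup.mem_map_of_mem _ hc⟩ :=
      hφZ ⟨(c : E), Subgroup.mem_map_of_mem _ hc⟩ c.2
    rw [h3]
    exact mul_ne_zero hχ1 (hφZne _)
  -- Fact C : φZ is "faithful" on elements of N central in E
  have factC : ∀ (c : ↥N) (hcE : (c : E) ∈ Subgroup.center E),
      φZ ⟨(c : E), Subgroup.mem_map_of_mem _ (hcen c hcE)⟩ = 1 → c = 1 := by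
    intro c hcE hone
    obtain ⟨μ, hμ⟩ := schur_scalar_s12 σ hσirr (c : E)
      (fun h => (Subgroup.mem_center_iff.mp hcE h).symm)
    have hμ0 : μ ≠ 0 := by
      intro h0
      obtain ⟨v0, hv0⟩ := exists_ne (0 : V)
      apply hv0
      have h1 : σ ((c : E))⁻¹ (σ (c : E) v0) = v0 := by
        rw [← Module.End.mul_apply, ← map_mul, inv_mul_cancel, map_one, Module.End.one_apply]
      rw [hμ, h0, zero_smul, map_zero] at h1
      exact h1.symm
    have hμinv : ∀ v : V, σ ((c : E))⁻¹ v = μ⁻¹ • v := by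
      intro v
      have h1 : σ (c : E) (σ ((c : E))⁻¹ v) = v := by
        rw [← Module.End.mul_apply, ← map_mul, mul_inv_cancel, map_one, Module.End.one_apply]
      rw [hμ] at h1
      calc σ ((c : E))⁻¹ v = μ⁻¹ • (μ • σ ((c : E))⁻¹ v) := by
            rw [smul_smul, inv_mul_cancel₀ hμ0, one_smul]
        _ = μ⁻¹ • v := by rw [h1]
    set S := ∑ n : ↥N, repChar ρ n * repChar σ ((n⁻¹ : ↥N) : E) with hSdef
    have hS : S ≠ 0 := fun h => hconst (by rw [h, mul_zero])
    have hre : ∑ n : ↥N, repChar ρ (c * n) * repChar σ (((c * n)⁻¹ : ↥N) : E) = S :=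
      Fintype.sum_equiv (Equiv.mulLeft c) _ _ (fun n => rfl)
    have hpt : ∀ n : ↥N, repChar ρ (c * n) * repChar σ (((c * n)⁻¹ : ↥N) : E)
        = (φZ ⟨(c : E), Subgroup.mem_map_of_mem _ (hcen c hcE)⟩ * μ⁻¹) *
          (repChar ρ n * repChar σ ((n⁻¹ : ↥N) : E)) := by
      intro n
      have e1 := factA c (hcen c hcE) n
      have hco : (((c * n)⁻¹ : ↥N) : E) = ((n⁻¹ : ↥N) : E) * ((c : E))⁻¹ := by
        rw [mul_inv_rev]
        simp
      have e2 : repChar σ (((c * n)⁻¹ : ↥N) : E)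
          = μ⁻¹ * repChar σ ((n⁻¹ : ↥N) : E) := by
        rw [hco, repChar_mul_right_of_scalar σ hμinv]
      rw [e1, e2]
      ring
    rw [Finset.sum_congr rfl (fun n _ => hpt n), ← Finset.mul_sum, ← hSdef] at hre
    have hcancel : φZ ⟨(c : E), Subgroup.mem_map_of_mem _ (hcen c hcE)⟩ * μ⁻¹ = 1 :=
      mul_right_cancel₀ hS (hre.trans (one_mul S).symm)
    rw [hone, one_mul] at hcancel
    have hμ1 : μ = 1 := by
      have := congrArg (· * μ) hcancel
      simpa [inv_mul_cancel₀ hμ0] using this.symm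
    have hc1 : (c : E) = 1 := factFaith _ (fun v => by rw [hμ v, hμ1, one_smul])
    exact Subtype.ext hc1
  -- Fact D : commutators lie in Z(E) ∩ N
  have factD : ∀ (a : E) (x : ↥N),
      (a * ↑x * a⁻¹ * ((x : E))⁻¹) ∈ Subgroup.center E ∧
      a * ↑x * a⁻¹ * ((x : E))⁻¹ ∈ N := by
    intro a x
    constructor
    · apply hE
      have h : a * ↑x * a⁻¹ * ((x : E))⁻¹ = (open scoped commutatorElement in ⁅a, (x : E)⁆) := rfl
      rw [h, commutator_def]
      exact Subgroup.commutator_mem_commutator (Subgroup.mem_top a) (Subgroup.mem_top _)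
    · exact N.mul_mem ((inferInstance : N.Normal).conj_mem _ x.2 a) (N.inv_mem x.2)
  -- Fact E : conjugation as multiplication by commutator
  have factE : ∀ (a : E) (x : ↥N),
      conjHom N a x = (⟨a * ↑x * a⁻¹ * ((x : E))⁻¹, (factD a x).2⟩ : ↥N) * x := by
    intro a x
    apply Subtype.ext
    show a * ↑x * a⁻¹ = _
    push_cast
    group
  -- Fact F : χ vanishes off Z(N)
  have factF : ∀ x : ↥N, repChar ρ x ≠ 0 → x ∈ Subgroup.center ↥N := by
    intro x hx
    rw [Subgroup.mem_center_iff]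
    intro n
    have h1 : repChar ρ (n * x * n⁻¹) = repChar ρ x := repChar_conj ρ n x
    have h2 : (n * x * n⁻¹ : ↥N)
        = (⟨↑n * ↑x * ((n : E))⁻¹ * ((x : E))⁻¹, (factD (↑n) x).2⟩ : ↥N) * x := by
      apply Subtype.ext
      push_cast
      group
    rw [h2, factA _ (hcen _ (factD (↑n : E) x).1)] at h1
    have hone : φZ ⟨↑n * ↑x * ((n : E))⁻¹ * ((x : E))⁻¹,
        memM _ (factD (↑n : E) x).2
          (hcen ⟨↑n * ↑x * ((n : E))⁻¹ * ((x : E))⁻¹, (factD (↑n : E) x).2⟩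
            (factD (↑n : E) x).1)⟩ = 1 :=
      mul_right_cancel₀ hx (h1.trans (one_mul _).symm)
    have hd1 := factC ⟨↑n * ↑x * ((n : E))⁻¹ * ((x : E))⁻¹, (factD (↑n : E) x).2⟩
      (factD (↑n : E) x).1 hone
    have hval : ↑n * ↑x * ((n : E))⁻¹ * ((x : E))⁻¹ = 1 := congrArg Subtype.val hd1
    have hkey : ((n : E) * ↑x) * (((x : E)) * ↑n)⁻¹ = 1 := by
      rw [mul_inv_rev, ← mul_assoc]
      exact hval
    exact Subtype.ext (mul_inv_eq_one.mp hkey)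
  intro g
  -- P → R
  have PR : (∀ x : ↥N, repChar ρ (conjHom N g x) = repChar ρ x) →
      g ∈ Subgroup.centralizer (((Subgroup.center ↥N).map N.subtype : Subgroup E) : Set E) := by
    intro hP
    rw [Subgroup.mem_centralizer_iff]
    intro m hm
    rw [SetLike.mem_coe] at hm
    obtain ⟨c, hc, rfl⟩ := Subgroup.mem_map.mp hm
    have h1 := hP c
    rw [factE g c, factA _ (hcen _ (factD g c).1)] at h1
    have hone : φZ ⟨g * ↑c * g⁻¹ * ((c : E))⁻¹,
        memM _ (factD g c).2
          (hcen ⟨g * ↑c * g⁻¹ * ((c : E))⁻¹, (factD g c).2⟩ (factD g c).1)⟩ = 1 :=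
      mul_right_cancel₀ (hχcne c hc) (h1.trans (one_mul _).symm)
    have hd1 := factC ⟨g * ↑c * g⁻¹ * ((c : E))⁻¹, (factD g c).2⟩ (factD g c).1 hone
    have hval : g * ↑c * g⁻¹ * ((c : E))⁻¹ = 1 := congrArg Subtype.val hd1
    have hkey : (g * ↑c) * (((c : E)) * g)⁻¹ = 1 := by
      rw [mul_inv_rev, ← mul_assoc]
      exact hval
    exact (mul_inv_eq_one.mp hkey).symm
  -- R → P
  have RP : g ∈ Subgroup.centralizer
      (((Subgroup.center ↥N).map N.subtype : Subgroup E) : Set E) →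
      (∀ x : ↥N, repChar ρ (conjHom N g x) = repChar ρ x) := by
    intro hR x
    by_cases hx : repChar ρ x = 0
    · rw [factE g x, factA _ (hcen _ (factD g x).1), hx, mul_zero]
    · have hxc := factF x hx
      have hcomm : (x : E) * g = g * ↑x :=
        Subgroup.mem_centralizer_iff.mp hR ↑x
          (SetLike.mem_coe.mpr (Subgroup.mem_map_of_mem _ hxc))
      have hfix : conjHom N g x = x := by
        apply Subtype.ext
        show g * ↑x * g⁻¹ = (x : E)
        rw [← hcomm]
        group
      rw [hfix]
  -- P → Q
  have PQ : (∀ x : ↥N, repChar ρ (conjHom N g x) = repChar ρ x) →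
      (∀ (z : ↥((Subgroup.center ↥N).map N.subtype))
        (h2 : g * (z : E) * g⁻¹ ∈ (Subgroup.center ↥N).map N.subtype),
        φZ ⟨g * (z : E) * g⁻¹, h2⟩ = φZ z) := by
    intro hP z h2
    obtain ⟨c, hc, hce⟩ := Subgroup.mem_map.mp z.2
    have hzN : (z : E) ∈ N := by rw [← hce]; exact c.2
    have hz'N : g * (z : E) * g⁻¹ ∈ N := (inferInstance : N.Normal).conj_mem _ hzN g
    have e1 : repChar ρ ⟨(z : E), hzN⟩ = repChar ρ 1 * φZ z := hφZ z hzN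
    have e2 : repChar ρ ⟨g * (z : E) * g⁻¹, hz'N⟩
        = repChar ρ 1 * φZ ⟨g * (z : E) * g⁻¹, h2⟩ := hφZ ⟨g * (z : E) * g⁻¹, h2⟩ hz'N
    have e3 := hP ⟨(z : E), hzN⟩
    have e4 : conjHom N g ⟨(z : E), hzN⟩ = ⟨g * (z : E) * g⁻¹, hz'N⟩ := rfl
    rw [e4, e2, e1] at e3
    exact mul_left_cancel₀ hχ1 e3
  -- Q → R
  have QR : (∀ (z : ↥((Subgroup.center ↥N).map N.subtype))
        (h2 : g * (z : E) * g⁻¹ ∈ (Subgroup.center ↥N).map N.subtype),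
        φZ ⟨g * (z : E) * g⁻¹, h2⟩ = φZ z) →
      g ∈ Subgroup.centralizer
        (((Subgroup.center ↥N).map N.subtype : Subgroup E) : Set E) := by
    intro hQ
    rw [Subgroup.mem_centralizer_iff]
    intro m hm
    rw [SetLike.mem_coe] at hm
    obtain ⟨c, hc, rfl⟩ := Subgroup.mem_map.mp hm
    have hdM : g * ↑c * g⁻¹ * ((c : E))⁻¹ ∈ (Subgroup.center ↥N).map N.subtype :=
      memM _ (factD g c).2
        (hcen ⟨g * ↑c * g⁻¹ * ((c : E))⁻¹, (factD g c).2⟩ (factD g c).1)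
    have h2 : g * ↑c * g⁻¹ ∈ (Subgroup.center ↥N).map N.subtype := by
      have hrw : g * (c : E) * g⁻¹ = (g * ↑c * g⁻¹ * ((c : E))⁻¹) * ↑c := by group
      rw [hrw]
      exact Subgroup.mul_mem _ hdM (Subgroup.mem_map_of_mem _ hc)
    have e := hQ ⟨(c : E), Subgroup.mem_map_of_mem _ hc⟩ h2
    have hsplit : (⟨g * (c : E) * g⁻¹, h2⟩ : ↥((Subgroup.center ↥N).map N.subtype))
        = (⟨g * ↑c * g⁻¹ * ((c : E))⁻¹, hdM⟩ : ↥((Subgroup.center ↥N).map N.subtype)) *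
          ⟨(c : E), Subgroup.mem_map_of_mem _ hc⟩ := by
      exact Subtype.ext (show g * (c : E) * g⁻¹
        = (g * ↑c * g⁻¹ * ((c : E))⁻¹) * ↑c by group)
    rw [hsplit, map_mul] at e
    have hone : φZ ⟨g * ↑c * g⁻¹ * ((c : E))⁻¹, hdM⟩ = 1 :=
      mul_right_cancel₀ (hφZne _) (e.trans (one_mul _).symm)
    have hd1 := factC ⟨g * ↑c * g⁻¹ * ((c : E))⁻¹, (factD g c).2⟩ (factD g c).1 hone
    have hval : g * ↑c * g⁻¹ * ((c : E))⁻¹ = 1 := congrArg Subtype.val hd1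
    have hkey : (g * ↑c) * (((c : E)) * g)⁻¹ = 1 := by
      rw [mul_inv_rev, ← mul_assoc]
      exact hval
    exact (mul_inv_eq_one.mp hkey).symm
  exact ⟨⟨PQ, fun hQ => RP (QR hQ)⟩, ⟨PR, RP⟩⟩
end

section
/- Let E be a finite group, ρ: E → GL(V) an irreducible unitary representation with character φ satisfying φ(1)² = [E : Z(E)], N ⊴ E, and χ an irreducible constituent of φ↓N with central idempotent e_χ on V. Writing Y = Z(E) ∩ N, the dimension of the image of e_χ equals |Y|·φ(1)·χ(1)² / |N|. -/
open scoped BigOperators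

set_option linter.unusedSectionVars false

section Aux
variable {G V : Type*} [Group G] [AddCommGroup V] [Module ℂ V] [FiniteDimensional ℂ V]

lemma repIrr_nontrivial (ρ : Representation ℂ G V) (h : RepIrreducible ρ) : Nontrivial V := by
  rcases subsingleton_or_nontrivial V with hs | hn
  · exact absurd (Subsingleton.elim _ _) h.1
  · exact hn

lemma rep_schur (ρ : Representation ℂ G V) (h : RepIrreducible ρ) (T : V →ₗ[ℂ] V)
    (hT : ∀ g : G, T ∘ₗ (ρ g : V →ₗ[ℂ] V) = (ρ g : V →ₗ[ℂ] V) ∘ₗ T) :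
    ∃ c : ℂ, T = c • (LinearMap.id : V →ₗ[ℂ] V) := by
  have : Nontrivial V := repIrr_nontrivial ρ h
  obtain ⟨c, hc⟩ := Module.End.exists_eigenvalue (T : Module.End ℂ V)
  refine ⟨c, ?_⟩
  have hinv : ∀ g v, v ∈ Module.End.eigenspace T c → ρ g v ∈ Module.End.eigenspace T c := by
    intro g v hv
    rw [Module.End.mem_eigenspace_iff] at hv ⊢
    have h2 : T (ρ g v) = ρ g (T v) := congrArg (fun f => f v) (hT g)
    rw [h2, hv, map_smul]
  rcases h.2 _ hinv with h0 | h1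
  · exact absurd h0 hc
  · ext v
    have hv : v ∈ Module.End.eigenspace T c := h1 ▸ Submodule.mem_top
    simpa [Module.End.mem_eigenspace_iff] using hv
end Aux

section Orth
variable {G V : Type*} [Group G] [Fintype G] [AddCommGroup V] [Module ℂ V] [FiniteDimensional ℂ V]

-- averaging operator is scalar with known constant
lemma rep_average (ρ : Representation ℂ G V) (h : RepIrreducible ρ) (A : V →ₗ[ℂ] V) :
    ∑ g : G, (ρ g : V →ₗ[ℂ] V) * A * (ρ g⁻¹ : V →ₗ[ℂ] V)
      = ((Fintype.card G : ℂ) * LinearMap.trace ℂ V A / (Module.finrank ℂ V : ℂ)) •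
        (LinearMap.id : V →ₗ[ℂ] V) := by
  have hnt : Nontrivial V := repIrr_nontrivial ρ h
  set P : V →ₗ[ℂ] V := ∑ g : G, (ρ g : V →ₗ[ℂ] V) * A * (ρ g⁻¹ : V →ₗ[ℂ] V) with hP
  have hcomm : ∀ x : G, P ∘ₗ (ρ x : V →ₗ[ℂ] V) = (ρ x : V →ₗ[ℂ] V) ∘ₗ P := by
    intro x
    have key : ∀ g : G, (ρ x : V →ₗ[ℂ] V) * ((ρ g : V →ₗ[ℂ] V) * A * (ρ g⁻¹ : V →ₗ[ℂ] V))
        = ((ρ (x*g) : V →ₗ[ℂ] V) * A * (ρ (x*g)⁻¹ : V →ₗ[ℂ] V)) * (ρ x : V →ₗ[ℂ] V) := by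
      intro g
      have h1 : (ρ (x*g) : V →ₗ[ℂ] V) = (ρ x : V →ₗ[ℂ] V) * (ρ g : V →ₗ[ℂ] V) := map_mul ρ x g
      have h2 : (ρ (x*g)⁻¹ : V →ₗ[ℂ] V) * (ρ x : V →ₗ[ℂ] V) = (ρ g⁻¹ : V →ₗ[ℂ] V) := by
        rw [← map_mul]; congr 1; group
      rw [h1, mul_assoc, mul_assoc, mul_assoc, h2, ← mul_assoc]
    rw [← Module.End.mul_eq_comp, ← Module.End.mul_eq_comp, hP, Finset.sum_mul, Finset.mul_sum]
    exact (Fintype.sum_bijective (fun g => x*g) (Group.mulLeft_bijective x)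
      (fun g => (ρ x : V →ₗ[ℂ] V) * ((ρ g : V →ₗ[ℂ] V) * A * (ρ g⁻¹ : V →ₗ[ℂ] V)))
      (fun g => ((ρ g : V →ₗ[ℂ] V) * A * (ρ g⁻¹ : V →ₗ[ℂ] V)) * (ρ x : V →ₗ[ℂ] V))
      (fun g => key g)).symm
  obtain ⟨c, hc⟩ := rep_schur ρ h P hcomm
  have htr : LinearMap.trace ℂ V P = (Fintype.card G : ℂ) * LinearMap.trace ℂ V A := by
    rw [hP, map_sum]
    have : ∀ g : G, LinearMap.trace ℂ V ((ρ g : V →ₗ[ℂ] V) * A * (ρ g⁻¹ : V →ₗ[ℂ] V))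
        = LinearMap.trace ℂ V A := by
      intro g
      have h3 : (ρ g⁻¹ : V →ₗ[ℂ] V) * ((ρ g : V →ₗ[ℂ] V) * A) = A := by
        rw [← mul_assoc, ← map_mul, inv_mul_cancel, map_one, one_mul]
      rw [LinearMap.trace_mul_comm, h3]
    rw [Finset.sum_congr rfl (fun g _ => this g), Finset.sum_const, Finset.card_univ,
      nsmul_eq_mul]
  have htrc : LinearMap.trace ℂ V P = c * (Module.finrank ℂ V : ℂ) := by
    rw [hc, map_smul, LinearMap.trace_id, smul_eq_mul]
  have hn : (Module.finrank ℂ V : ℂ) ≠ 0 := by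
    have : 0 < Module.finrank ℂ V := Module.finrank_pos
    exact_mod_cast Nat.cast_ne_zero.mpr this.ne'
  have hcval : c = (Fintype.card G : ℂ) * LinearMap.trace ℂ V A / (Module.finrank ℂ V : ℂ) := by
    rw [eq_div_iff hn, ← htr]; exact htrc.symm
  rw [hc, hcval]

lemma char_orthog (ρ : Representation ℂ G V) (h : RepIrreducible ρ) :
    ∑ g : G, repChar ρ g * repChar ρ g⁻¹ = (Fintype.card G : ℂ) := by
  have hnt : Nontrivial V := repIrr_nontrivial ρ h
  set n := Module.finrank ℂ V with hn
  have hnpos : 0 < n := Module.finrank_pos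
  have hnne : (n : ℂ) ≠ 0 := Nat.cast_ne_zero.mpr hnpos.ne'
  let b : Module.Basis (Fin n) ℂ V := Module.finBasis ℂ V
  let M : G → Matrix (Fin n) (Fin n) ℂ := fun g => LinearMap.toMatrix b b (ρ g)
  have hch : ∀ g : G, repChar ρ g = (M g).trace := fun g =>
    LinearMap.trace_eq_matrix_trace ℂ b (ρ g)
  have key : ∀ i j : Fin n, ∑ g : G, M g i i * M g⁻¹ j j
      = if i = j then (Fintype.card G : ℂ) / n else 0 := by
    intro i j
    let A : V →ₗ[ℂ] V := Matrix.toLin b b (Matrix.single i j (1:ℂ))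
    have htrA : LinearMap.trace ℂ V A = if i = j then 1 else 0 := by
      rw [LinearMap.trace_eq_matrix_trace ℂ b, LinearMap.toMatrix_toLin]
      rcases eq_or_ne i j with rfl | hij
      · simp
      · simp [Matrix.trace_single_eq_of_ne i j (1:ℂ) hij, hij]
    have havg := rep_average ρ h A
    have hterm : ∀ g : G, (LinearMap.toMatrix b b
        ((ρ g : V →ₗ[ℂ] V) * A * (ρ g⁻¹ : V →ₗ[ℂ] V))) i j = M g i i * M g⁻¹ j j := by
      intro g
      rw [LinearMap.toMatrix_mul, LinearMap.toMatrix_mul, LinearMap.toMatrix_toLin]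
      rw [Matrix.mul_assoc, Matrix.mul_apply]
      rw [Finset.sum_eq_single_of_mem i (Finset.mem_univ i)
        (fun k _ hk => by
          rw [Matrix.single_mul_apply_of_ne (1:ℂ) i j k j hk, mul_zero])]
      rw [Matrix.single_mul_apply_same, one_mul]
    have hsum : ∑ g : G, M g i i * M g⁻¹ j j
        = ((Fintype.card G : ℂ) * LinearMap.trace ℂ V A / (n : ℂ)) *
          (1 : Matrix (Fin n) (Fin n) ℂ) i j := by
      rw [← Finset.sum_congr rfl (fun g _ => hterm g)] at *
      calc ∑ g : G, (LinearMap.toMatrix b b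
            ((ρ g : V →ₗ[ℂ] V) * A * (ρ g⁻¹ : V →ₗ[ℂ] V))) i j
          = (∑ g : G, (LinearMap.toMatrix b b
            ((ρ g : V →ₗ[ℂ] V) * A * (ρ g⁻¹ : V →ₗ[ℂ] V)))) i j := by
            rw [Matrix.sum_apply]
        _ = _ := by
            rw [← map_sum, havg, map_smul, LinearMap.toMatrix_id]
            simp [Matrix.smul_apply, smul_eq_mul]
            exact Or.inl rfl
    rw [hsum, htrA, Matrix.one_apply]
    rcases eq_or_ne i j with rfl | hij
    · simp
    · simp [hij]
  calc ∑ g : G, repChar ρ g * repChar ρ g⁻¹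
      = ∑ g : G, ∑ i : Fin n, ∑ j : Fin n, M g i i * M g⁻¹ j j := by
        refine Finset.sum_congr rfl fun g _ => ?_
        rw [hch g, hch g⁻¹, Matrix.trace, Matrix.trace, Finset.sum_mul_sum]
        rfl
    _ = ∑ i : Fin n, ∑ j : Fin n, ∑ g : G, M g i i * M g⁻¹ j j := by
        rw [Finset.sum_comm]
        exact Finset.sum_congr rfl fun i _ => Finset.sum_comm
    _ = ∑ i : Fin n, (Fintype.card G : ℂ) / n := by
        refine Finset.sum_congr rfl fun i _ => ?_
        rw [Finset.sum_congr rfl (fun j _ => key i j), Finset.sum_ite_eq Finset.univ i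
          (fun _ => (Fintype.card G : ℂ) / n)]
        simp
    _ = (Fintype.card G : ℂ) := by
        rw [Finset.sum_const, Finset.card_univ, Fintype.card_fin, nsmul_eq_mul]
        field_simp
end Orth

section GA
variable {G V W : Type*} [Group G] [Fintype G] [AddCommGroup V] [Module ℂ V]
  [FiniteDimensional ℂ V] [AddCommGroup W] [Module ℂ W] [FiniteDimensional ℂ W]

lemma repChar_one {H U : Type*} [Monoid H] [AddCommGroup U] [Module ℂ U]
    [FiniteDimensional ℂ U] (τ : Representation ℂ H U) :
    repChar τ 1 = (Module.finrank ℂ U : ℂ) := by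
  rw [repChar, map_one, LinearMap.trace_one]

lemma repChar_conj_s14 (σ : Representation ℂ G W) (m k : G) :
    repChar σ (m * k * m⁻¹) = repChar σ k := by
  have h1 : σ (m * k * m⁻¹) = σ (m * k) * σ m⁻¹ := map_mul σ _ _
  have h2 : (σ m⁻¹ : W →ₗ[ℂ] W) * σ (m * k) = σ k := by
    rw [← map_mul]; congr 1; group
  rw [repChar, repChar, h1, LinearMap.trace_mul_comm, h2]

lemma char_one_ne_zero (σ : Representation ℂ G W) (hσ : RepIrreducible σ)
    (χ : G → ℂ) (hχ : χ = repChar σ) : χ 1 ≠ 0 := by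
  have : Nontrivial W := repIrr_nontrivial σ hσ
  rw [hχ, repChar_one]
  exact Nat.cast_ne_zero.mpr Module.finrank_pos.ne'

lemma sum_char_smul (σ : Representation ℂ G W) (hσ : RepIrreducible σ)
    (χ : G → ℂ) (hχ : χ = repChar σ) :
    ∑ k : G, χ k⁻¹ • (σ k : W →ₗ[ℂ] W)
      = ((Fintype.card G : ℂ) / χ 1) • (LinearMap.id : W →ₗ[ℂ] W) := by
  have hnt : Nontrivial W := repIrr_nontrivial σ hσ
  set T : W →ₗ[ℂ] W := ∑ k : G, χ k⁻¹ • (σ k : W →ₗ[ℂ] W) with hT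
  have hcomm : ∀ g : G, T ∘ₗ (σ g : W →ₗ[ℂ] W) = (σ g : W →ₗ[ℂ] W) ∘ₗ T := by
    intro g
    rw [← Module.End.mul_eq_comp, ← Module.End.mul_eq_comp, hT, Finset.sum_mul, Finset.mul_sum]
    refine (Fintype.sum_bijective (fun k => g⁻¹ * k * g)
      ((Group.mulRight_bijective g).comp (Group.mulLeft_bijective g⁻¹)) _ _ fun k => ?_)
    rw [smul_mul_assoc, mul_smul_comm]
    have h1 : χ (g⁻¹ * k * g)⁻¹ = χ k⁻¹ := by
      have h0 : (g⁻¹ * k * g)⁻¹ = g⁻¹ * k⁻¹ * g⁻¹⁻¹ := by group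
      rw [h0, hχ, repChar_conj_s14]
    rw [h1]
    congr 1
    rw [← map_mul, ← map_mul]
    congr 1
    group
  obtain ⟨c, hc⟩ := rep_schur σ hσ T hcomm
  have htr : LinearMap.trace ℂ W T = (Fintype.card G : ℂ) := by
    rw [hT, map_sum]
    have : ∀ k : G, LinearMap.trace ℂ W (χ k⁻¹ • (σ k : W →ₗ[ℂ] W)) = χ k * χ k⁻¹ := by
      intro k
      rw [map_smul, smul_eq_mul, hχ, mul_comm]
      rfl
    rw [Finset.sum_congr rfl fun k _ => this k]
    subst hχ
    exact char_orthog σ hσ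
  have h1 : χ 1 ≠ 0 := char_one_ne_zero σ hσ χ hχ
  have hχ1 : χ 1 = (Module.finrank ℂ W : ℂ) := by rw [hχ, repChar_one]
  have htrc : LinearMap.trace ℂ W T = c * χ 1 := by
    rw [hc, map_smul, LinearMap.trace_id, smul_eq_mul, hχ1]
  have : c = (Fintype.card G : ℂ) / χ 1 := by
    rw [eq_div_iff h1, ← htr, htrc]
  rw [hc, this]

lemma char_conv (σ : Representation ℂ G W) (hσ : RepIrreducible σ)
    (χ : G → ℂ) (hχ : χ = repChar σ) (m : G) :
    ∑ k : G, χ k⁻¹ * χ (m * k) = ((Fintype.card G : ℂ) / χ 1) * χ m := by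
  have key := sum_char_smul σ hσ χ hχ
  have h2 := congrArg (fun T : W →ₗ[ℂ] W => LinearMap.trace ℂ W ((σ m : W →ₗ[ℂ] W) * T)) key
  simp only [Finset.mul_sum, mul_smul_comm, map_sum, map_smul, smul_eq_mul] at h2
  calc ∑ k : G, χ k⁻¹ * χ (m * k)
      = ∑ k : G, χ k⁻¹ * LinearMap.trace ℂ W ((σ m : W →ₗ[ℂ] W) * (σ k : W →ₗ[ℂ] W)) := by
        refine Finset.sum_congr rfl fun k _ => ?_
        congr 1
        rw [hχ, repChar, map_mul]
    _ = ((Fintype.card G : ℂ) / χ 1) * LinearMap.trace ℂ W ((σ m : W →ₗ[ℂ] W) * LinearMap.id) := h2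
    _ = ((Fintype.card G : ℂ) / χ 1) * χ m := by
        have hid : (σ m : W →ₗ[ℂ] W) * LinearMap.id = σ m := by ext v; rfl
        rw [hid, hχ]; rfl

lemma e_idem (ρ : Representation ℂ G V) (σ : Representation ℂ G W) (hσ : RepIrreducible σ)
    (χ : G → ℂ) (hχ : χ = repChar σ) :
    IsIdempotentElem ((χ 1 / (Fintype.card G : ℂ)) • ∑ k : G, χ k⁻¹ • (ρ k : V →ₗ[ℂ] V)) := by
  have h1 : χ 1 ≠ 0 := char_one_ne_zero σ hσ χ hχ
  have hcard : (Fintype.card G : ℂ) ≠ 0 := Nat.cast_ne_zero.mpr Fintype.card_ne_zero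
  set T : V →ₗ[ℂ] V := ∑ k : G, χ k⁻¹ • (ρ k : V →ₗ[ℂ] V) with hT
  have hTT : T * T = ((Fintype.card G : ℂ) / χ 1) • T := by
    have step1 : ∀ k : G, (ρ k : V →ₗ[ℂ] V) * T = ∑ m : G, χ (m⁻¹ * k) • (ρ m : V →ₗ[ℂ] V) := by
      intro k
      rw [hT, Finset.mul_sum]
      refine Fintype.sum_bijective (fun l => k * l) (Group.mulLeft_bijective k) _ _ fun l => ?_
      rw [mul_smul_comm, ← map_mul]
      congr 2
      group
    calc T * T = ∑ k : G, χ k⁻¹ • ((ρ k : V →ₗ[ℂ] V) * T) := by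
          rw [hT, Finset.sum_mul]
          exact Finset.sum_congr rfl fun k _ => smul_mul_assoc _ _ _
      _ = ∑ k : G, ∑ m : G, (χ k⁻¹ * χ (m⁻¹ * k)) • (ρ m : V →ₗ[ℂ] V) := by
          refine Finset.sum_congr rfl fun k _ => ?_
          rw [step1 k, Finset.smul_sum]
          exact Finset.sum_congr rfl fun m _ => (smul_smul _ _ _)
      _ = ∑ m : G, (∑ k : G, χ k⁻¹ * χ (m⁻¹ * k)) • (ρ m : V →ₗ[ℂ] V) := by
          rw [Finset.sum_comm]
          exact Finset.sum_congr rfl fun m _ => (Finset.sum_smul).symm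
      _ = ∑ m : G, (((Fintype.card G : ℂ) / χ 1) * χ m⁻¹) • (ρ m : V →ₗ[ℂ] V) := by
          exact Finset.sum_congr rfl fun m _ => by rw [char_conv σ hσ χ hχ m⁻¹]
      _ = ((Fintype.card G : ℂ) / χ 1) • T := by
          rw [hT, Finset.smul_sum]
          exact Finset.sum_congr rfl fun m _ => (smul_smul _ _ _).symm
  unfold IsIdempotentElem
  rw [smul_mul_assoc, mul_smul_comm, hTT, smul_smul, smul_smul]
  congr 1
  field_simp
end GA

section U
variable {V : Type*} [NormedAddCommGroup V] [InnerProductSpace ℂ V] [FiniteDimensional ℂ V]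

lemma trace_inner (T : V →ₗ[ℂ] V) :
    LinearMap.trace ℂ V T = ∑ i, (inner ℂ ((stdOrthonormalBasis ℂ V) i)
      (T ((stdOrthonormalBasis ℂ V) i)) : ℂ) := by
  set b := stdOrthonormalBasis ℂ V
  rw [LinearMap.trace_eq_matrix_trace ℂ b.toBasis, Matrix.trace]
  refine Finset.sum_congr rfl fun i _ => ?_
  rw [Matrix.diag_apply, LinearMap.toMatrix_apply, OrthonormalBasis.coe_toBasis_repr_apply,
    OrthonormalBasis.repr_apply_apply, OrthonormalBasis.coe_toBasis]

lemma repChar_inv_conj {G : Type*} [Group G] (ρ : Representation ℂ G V)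
    (hunit : ∀ (g : G) (v w : V), (inner ℂ (ρ g v) (ρ g w) : ℂ) = inner ℂ v w) (g : G) :
    repChar ρ g⁻¹ = starRingEnd ℂ (repChar ρ g) := by
  rw [repChar, repChar, trace_inner, trace_inner, map_sum]
  refine Finset.sum_congr rfl fun i _ => ?_
  set v := (stdOrthonormalBasis ℂ V) i
  have h1 : ρ g (ρ g⁻¹ v) = v := by
    have : (ρ g : V →ₗ[ℂ] V) * ρ g⁻¹ = 1 := by rw [← map_mul, mul_inv_cancel, map_one]
    exact congrArg (fun f : V →ₗ[ℂ] V => f v) this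
  calc (inner ℂ v (ρ g⁻¹ v) : ℂ) = inner ℂ (ρ g v) (ρ g (ρ g⁻¹ v)) := (hunit g v _).symm
    _ = inner ℂ (ρ g v) v := by rw [h1]
    _ = starRingEnd ℂ (inner ℂ v (ρ g v)) := (inner_conj_symm _ _).symm
end U

lemma idem_trace {V : Type*} [AddCommGroup V] [Module ℂ V] [FiniteDimensional ℂ V]
    (e : V →ₗ[ℂ] V) (h : IsIdempotentElem e) :
    LinearMap.trace ℂ V e = (Module.finrank ℂ (LinearMap.range e) : ℂ) := by
  have hp : LinearMap.IsProj (LinearMap.range e) e := by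
    refine ⟨fun x => LinearMap.mem_range_self e x, fun x hx => ?_⟩
    obtain ⟨y, rfl⟩ := hx
    exact congrArg (fun f : V →ₗ[ℂ] V => f y) h
  exact hp.trace

lemma card_Y {E : Type*} [Group E] (N : Subgroup E) :
    Nat.card {n : ↥N // (n : E) ∈ Subgroup.center E} = Nat.card ↥(Subgroup.center E ⊓ N) :=
  Nat.card_congr
    ⟨fun x => ⟨(x.1 : E), Subgroup.mem_inf.mpr ⟨x.2, x.1.2⟩⟩,
     fun y => ⟨⟨y.1, (Subgroup.mem_inf.mp y.2).2⟩, (Subgroup.mem_inf.mp y.2).1⟩,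
     fun x => by ext; rfl, fun y => by ext; rfl⟩

/-- For an irreducible unitary representation `ρ` of `E` with
`φ(1)² = [E:Z(E)]`, `N ⊴ E`, and `χ` an irreducible constituent of `φ↓N`, the
dimension of the image of `e_χ` is `|Y|·φ(1)·χ(1)²/|N|`, where `Y = Z(E) ∩ N`. -/
theorem dim_image_idempotent_formula
    {E V W : Type*} [Group E] [Fintype E]
    [NormedAddCommGroup V] [InnerProductSpace ℂ V] [FiniteDimensional ℂ V]
    [AddCommGroup W] [Module ℂ W] [FiniteDimensional ℂ W]
    (ρ : Representation ℂ E V) (hρirr : RepIrreducible ρ)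
    (hunit : ∀ (g : E) (v w : V), (inner ℂ (ρ g v) (ρ g w) : ℂ) = inner ℂ v w)
    (φ : E → ℂ) (hφ : φ = repChar ρ)
    (hdeg : φ 1 * φ 1 = ((Subgroup.center E).index : ℂ))
    (N : Subgroup E) [N.Normal] [Fintype ↥N]
    (σ : Representation ℂ ↥N W) (hσirr : RepIrreducible σ)
    (χ : ↥N → ℂ) (hχ : χ = repChar σ)
    (hconst : (Fintype.card ↥N : ℂ)⁻¹ * ∑ n : ↥N, χ n * φ ((n⁻¹ : ↥N) : E) ≠ 0)
    (e : V →ₗ[ℂ] V)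
    (he : e = (χ 1 / (Fintype.card ↥N : ℂ)) • ∑ n : ↥N, χ n⁻¹ • (ρ (n : E) : V →ₗ[ℂ] V)) :
    (Module.finrank ℂ (LinearMap.range e) : ℂ) =
      (Nat.card ↥(Subgroup.center E ⊓ N) : ℂ) * φ 1 * (χ 1) ^ 2 / (Fintype.card ↥N : ℂ) := by
  classical
  have hntV : Nontrivial V := repIrr_nontrivial ρ hρirr
  have hφ1 : φ 1 = (Module.finrank ℂ V : ℂ) := by rw [hφ]; exact repChar_one ρ
  -- conjugate of character
  have hconj : ∀ g : E, φ g⁻¹ = starRingEnd ℂ (φ g) := by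
    intro g; rw [hφ]; exact repChar_inv_conj ρ hunit g
  -- central elements act by scalars
  have hcent : ∀ z : E, z ∈ Subgroup.center E →
      ∃ d : ℂ, (ρ z : V →ₗ[ℂ] V) = d • LinearMap.id := by
    intro z hz
    refine rep_schur ρ hρirr (ρ z) fun g => ?_
    rw [← Module.End.mul_eq_comp, ← Module.End.mul_eq_comp, ← map_mul, ← map_mul]
    congr 1
    exact (Subgroup.mem_center_iff.mp hz g).symm
  -- orthogonality in conjugate form
  have horth : ∑ g : E, φ g * starRingEnd ℂ (φ g) = (Fintype.card E : ℂ) := by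
    rw [← char_orthog ρ hρirr]
    refine Finset.sum_congr rfl fun g _ => ?_
    rw [← hconj g, hφ]
  -- on the center each |φ z|² equals the index
  have hZsq : ∀ z ∈ Subgroup.center E,
      φ z * starRingEnd ℂ (φ z) = ((Subgroup.center E).index : ℂ) := by
    intro z hz
    obtain ⟨d, hd⟩ := hcent z hz
    obtain ⟨v, hv⟩ := exists_ne (0 : V)
    have hzv : ρ z v = d • v := congrArg (fun f : V →ₗ[ℂ] V => f v) hd
    have hthis := hunit z v v
    rw [hzv, inner_smul_left, inner_smul_right] at hthis
    have hvv : (inner ℂ v v : ℂ) ≠ 0 := inner_self_ne_zero.mpr hv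
    have hdd : starRingEnd ℂ d * d = 1 := by
      have h2 : (starRingEnd ℂ d * d) * (inner ℂ v v : ℂ) = 1 * (inner ℂ v v : ℂ) := by
        rw [mul_assoc, one_mul]; exact hthis
      exact mul_right_cancel₀ hvv h2
    have hφz : φ z = d * φ 1 := by
      rw [hφ, repChar, repChar, hd, map_smul, map_one, LinearMap.trace_id, LinearMap.trace_one,
        smul_eq_mul]
    calc φ z * starRingEnd ℂ (φ z)
        = (starRingEnd ℂ d * d) * (φ 1 * φ 1) := by
          rw [hφz, map_mul, hφ1, map_natCast]; ring
      _ = ((Subgroup.center E).index : ℂ) := by rw [hdd, one_mul, hdeg]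
  -- φ vanishes off the center
  have hvan : ∀ g : E, g ∉ Subgroup.center E → φ g = 0 := by
    have hsplit := Finset.sum_filter_add_sum_filter_not Finset.univ
      (fun g : E => g ∈ Subgroup.center E) (fun g => φ g * starRingEnd ℂ (φ g))
    have hfc : (Finset.univ.filter (fun g : E => g ∈ Subgroup.center E)).card
        = Nat.card ↥(Subgroup.center E) := by
      rw [Nat.card_eq_fintype_card, Fintype.card_subtype]
    have hsumZ : ∑ g ∈ Finset.univ.filter (fun g : E => g ∈ Subgroup.center E),
        φ g * starRingEnd ℂ (φ g)
        = (Nat.card ↥(Subgroup.center E) : ℂ) * ((Subgroup.center E).index : ℂ) := by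
      rw [Finset.sum_congr rfl (fun g hg => hZsq g (Finset.mem_filter.mp hg).2),
        Finset.sum_const, hfc, nsmul_eq_mul]
    have hzc : (Nat.card ↥(Subgroup.center E) : ℂ) * ((Subgroup.center E).index : ℂ)
        = (Fintype.card E : ℂ) := by
      rw [← Nat.cast_mul, Subgroup.card_mul_index, Nat.card_eq_fintype_card]
    have hrest : ∑ g ∈ Finset.univ.filter (fun g : E => ¬ g ∈ Subgroup.center E),
        φ g * starRingEnd ℂ (φ g) = 0 := by
      rw [horth, hsumZ, hzc] at hsplit
      exact add_left_cancel (hsplit.trans (add_zero (Fintype.card E : ℂ)).symm)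
    intro g hg
    have hnn : ∑ g ∈ Finset.univ.filter (fun g : E => ¬ g ∈ Subgroup.center E),
        Complex.normSq (φ g) = 0 := by
      have hcast : ((∑ g ∈ Finset.univ.filter (fun g : E => ¬ g ∈ Subgroup.center E),
          Complex.normSq (φ g) : ℝ) : ℂ) = 0 := by
        push_cast
        rw [← hrest]
        exact Finset.sum_congr rfl fun g _ => (Complex.mul_conj (φ g)).symm
      exact_mod_cast hcast
    have h0 := (Finset.sum_eq_zero_iff_of_nonneg
      (fun g _ => Complex.normSq_nonneg (φ g))).mp hnn g
      (Finset.mem_filter.mpr ⟨Finset.mem_univ g, hg⟩)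
    exact Complex.normSq_eq_zero.mp h0
  -- the nonzero inner product
  have hS : (∑ m : ↥N, χ m * φ ((m⁻¹ : ↥N) : E)) ≠ 0 := by
    intro h0; exact hconst (by rw [h0, mul_zero])
  -- key computation on central elements of N
  have hkey : ∀ n : ↥N, (n : E) ∈ Subgroup.center E → χ n⁻¹ * φ ((n : ↥N) : E) = χ 1 * φ 1 := by
    intro n hn
    have hn' : ((n⁻¹ : ↥N) : E) ∈ Subgroup.center E := (Subgroup.center E).inv_mem hn
    have hccomm : ∀ m : ↥N, (σ n⁻¹ : W →ₗ[ℂ] W) ∘ₗ σ m = (σ m : W →ₗ[ℂ] W) ∘ₗ σ n⁻¹ := by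
      intro m
      rw [← Module.End.mul_eq_comp, ← Module.End.mul_eq_comp, ← map_mul, ← map_mul]
      congr 1
      apply Subtype.ext
      push_cast
      exact (Subgroup.mem_center_iff.mp hn' (m : E)).symm
    obtain ⟨c, hc⟩ := rep_schur σ hσirr (σ n⁻¹) hccomm
    obtain ⟨d, hd⟩ := hcent (n : E) hn
    have hχn : χ n⁻¹ = c * χ 1 := by
      rw [hχ, repChar, repChar, hc, map_one, map_smul, LinearMap.trace_id, LinearMap.trace_one,
        smul_eq_mul]
    have hφn : φ ((n : ↥N) : E) = d * φ 1 := by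
      rw [hφ, repChar, repChar, hd, map_one, map_smul, LinearMap.trace_id, LinearMap.trace_one,
        smul_eq_mul]
    -- the two central characters agree: c * d = 1
    have hre : ∑ m : ↥N, (c * d) * (χ m * φ ((m⁻¹ : ↥N) : E))
        = ∑ m : ↥N, χ m * φ ((m⁻¹ : ↥N) : E) := by
      refine Fintype.sum_bijective (fun m => n⁻¹ * m) (Group.mulLeft_bijective n⁻¹) _ _
        fun m => ?_
      have hχm : χ (n⁻¹ * m) = c * χ m := by
        rw [hχ, repChar, repChar, map_mul, hc, smul_mul_assoc, map_smul, smul_eq_mul]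
        congr 2
      have hφm : φ (((n⁻¹ * m)⁻¹ : ↥N) : E) = d * φ ((m⁻¹ : ↥N) : E) := by
        have hcoe : (((n⁻¹ * m)⁻¹ : ↥N) : E) = ((m⁻¹ : ↥N) : E) * ((n : ↥N) : E) := by
          push_cast; group
        rw [hcoe, hφ, repChar, repChar, map_mul, hd, mul_smul_comm, map_smul, smul_eq_mul]
        congr 2
      rw [hχm, hφm]
      ring
    have hcd : c * d = 1 := by
      have h2 : (c * d - 1) * (∑ m : ↥N, χ m * φ ((m⁻¹ : ↥N) : E)) = 0 := by
        rw [sub_mul, one_mul, Finset.mul_sum, hre, sub_self]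
      rcases mul_eq_zero.mp h2 with h3 | h3
      · exact sub_eq_zero.mp h3
      · exact absurd h3 hS
    calc χ n⁻¹ * φ ((n : ↥N) : E) = (c * d) * (χ 1 * φ 1) := by rw [hχn, hφn]; ring
      _ = χ 1 * φ 1 := by rw [hcd, one_mul]
  -- e is idempotent
  have hidem : IsIdempotentElem e := by
    rw [he]
    exact e_idem (ρ.comp N.subtype) σ hσirr χ hχ
  -- trace of e
  have htre : LinearMap.trace ℂ V e
      = (χ 1 / (Fintype.card ↥N : ℂ)) * ∑ n : ↥N, χ n⁻¹ * φ ((n : ↥N) : E) := by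
    rw [he, map_smul, map_sum, smul_eq_mul]
    congr 1
    refine Finset.sum_congr rfl fun n _ => ?_
    rw [map_smul, smul_eq_mul, hφ]
    rfl
  -- the sum over N localizes to Y
  have hsum : ∑ n : ↥N, χ n⁻¹ * φ ((n : ↥N) : E)
      = (Nat.card ↥(Subgroup.center E ⊓ N) : ℂ) * (χ 1 * φ 1) := by
    rw [← Finset.sum_filter_add_sum_filter_not Finset.univ
      (fun n : ↥N => (n : E) ∈ Subgroup.center E)]
    have h1 : ∑ n ∈ Finset.univ.filter (fun n : ↥N => (n : E) ∈ Subgroup.center E),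
        χ n⁻¹ * φ ((n : ↥N) : E) = (Nat.card ↥(Subgroup.center E ⊓ N) : ℂ) * (χ 1 * φ 1) := by
      rw [Finset.sum_congr rfl (fun n hn => hkey n (Finset.mem_filter.mp hn).2),
        Finset.sum_const, nsmul_eq_mul]
      congr 2
      rw [← card_Y N, Nat.card_eq_fintype_card, Fintype.card_subtype]
    have h2 : ∑ n ∈ Finset.univ.filter (fun n : ↥N => ¬ (n : E) ∈ Subgroup.center E),
        χ n⁻¹ * φ ((n : ↥N) : E) = 0 := by
      refine Finset.sum_eq_zero fun n hn => ?_
      rw [hvan _ (Finset.mem_filter.mp hn).2, mul_zero]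
    rw [h1, h2, add_zero]
  rw [← idem_trace e hidem, htre, hsum]
  ring
end

section
/- Let E be a finite abstract error group with abelian index group E/Z(E), ρ: E → U(V) a faithful irreducible unitary representation with character φ of degree [E:Z(E)]^{1/2}, N ⊴ E, and χ an irreducible constituent of φ↓N. Let φ_Z be the linear character of Z = Z(N) with χ↓Z = χ(1)φ_Z, and let e_χ and e_{φ_Z} be the corresponding orthogonal projections on V. Then im(e_χ) = im(e_{φ_Z}); i.e., every Clifford code for N is a stabilizer code for the abelian group Z(N). -/
open scoped BigOperators

/-- Schur: an endomorphism commuting with an irreducible rep is scalar. -/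
theorem schur_scalar_s15 {G V : Type*} [Monoid G] [AddCommGroup V] [Module ℂ V]
    [FiniteDimensional ℂ V] (ρ : Representation ℂ G V) (hirr : RepIrreducible ρ)
    (T : V →ₗ[ℂ] V) (hT : ∀ g : G, T ∘ₗ ρ g = ρ g ∘ₗ T) :
    ∃ μ : ℂ, T = μ • LinearMap.id := by
  have hnt : Nontrivial V := by
    by_contra h
    rw [not_nontrivial_iff_subsingleton] at h
    exact hirr.1 (Subsingleton.elim _ _)
  obtain ⟨μ, hμ⟩ := Module.End.exists_eigenvalue (T : Module.End ℂ V)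
  refine ⟨μ, ?_⟩
  have hU := hirr.2 (Module.End.eigenspace T μ) ?_
  · rcases hU with h | h
    · exact absurd h hμ
    · ext v
      have : v ∈ Module.End.eigenspace T μ := h ▸ Submodule.mem_top
      simpa [Module.End.mem_eigenspace_iff] using this
  · intro g v hv
    rw [Module.End.mem_eigenspace_iff] at hv ⊢
    have := congrArg (fun f => f v) (hT g)
    simp at this
    rw [this, hv]
    simp

/-- For an abstract error group `E` with abelian index group
(`E' ⊆ Z(E)`), a faithful irreducible unitary representation `ρ` of degree
`[E:Z(E)]^{1/2}`, `N ⊴ E`, and `χ` an irreducible constituent of `φ↓N`, the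
orthogonal projections `e_χ` and `e_{φ_Z}` have the same image: every Clifford code
for `N` is a stabilizer code for the abelian group `Z(N)`. -/
theorem clifford_code_is_stabilizer_code
    {E V W : Type*} [Group E] [Fintype E]
    [NormedAddCommGroup V] [InnerProductSpace ℂ V] [FiniteDimensional ℂ V]
    [AddCommGroup W] [Module ℂ W] [FiniteDimensional ℂ W]
    (hE : commutator E ≤ Subgroup.center E)
    (ρ : Representation ℂ E V) (hρirr : RepIrreducible ρ)
    (hρfaith : Function.Injective ρ)
    (hunit : ∀ (g : E) (v w : V), (inner ℂ (ρ g v) (ρ g w) : ℂ) = inner ℂ v w)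
    (φ : E → ℂ) (hφ : φ = repChar ρ)
    (hdeg : φ 1 * φ 1 = ((Subgroup.center E).index : ℂ))
    (N : Subgroup E) [N.Normal] [Fintype ↥N]
    (σ : Representation ℂ ↥N W) (hσirr : RepIrreducible σ)
    (χ : ↥N → ℂ) (hχ : χ = repChar σ)
    (hconst : (Fintype.card ↥N : ℂ)⁻¹ * ∑ n : ↥N, χ n * φ ((n⁻¹ : ↥N) : E) ≠ 0)
    (M : Subgroup E) (hM : M = (Subgroup.center ↥N).map N.subtype) [Fintype ↥M]
    (φZ : ↥M →* ℂ)
    (hφZ : ∀ (z : ↥M) (hz : (z : E) ∈ N), χ ⟨(z : E), hz⟩ = χ 1 * φZ z)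
    (eχ eφZ : V →ₗ[ℂ] V)
    (heχ : eχ = (χ 1 / (Fintype.card ↥N : ℂ)) • ∑ n : ↥N, χ n⁻¹ • (ρ (n : E) : V →ₗ[ℂ] V))
    (heφZ : eφZ = ((Fintype.card ↥M : ℂ))⁻¹ • ∑ z : ↥M, φZ z⁻¹ • (ρ (z : E) : V →ₗ[ℂ] V)) :
    LinearMap.range eχ = LinearMap.range eφZ := by
  classical
  -- nontriviality
  have hWnt : Nontrivial W := by
    by_contra h
    rw [not_nontrivial_iff_subsingleton] at h
    exact hσirr.1 (Subsingleton.elim _ _)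
  have hVnt : Nontrivial V := by
    by_contra h
    rw [not_nontrivial_iff_subsingleton] at h
    exact hρirr.1 (Subsingleton.elim _ _)
  -- χ 1 ≠ 0
  have hχ1 : χ 1 = (Module.finrank ℂ W : ℂ) := by
    rw [hχ, repChar, map_one, LinearMap.trace_one]
  have hχ1ne : χ 1 ≠ 0 := by
    rw [hχ1]
    exact_mod_cast Nat.cast_ne_zero.mpr Module.finrank_pos.ne'
  -- M ≤ N and the embedding
  have hmem : ∀ x : E, x ∈ M → ∃ w : ↥N, w ∈ Subgroup.center ↥N ∧ (w : E) = x := by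
    intro x hx
    rw [hM] at hx
    obtain ⟨w, hw, hwe⟩ := hx
    exact ⟨w, hw, hwe⟩
  have hMN : ∀ z : ↥M, (z : E) ∈ N := by
    intro z
    obtain ⟨w, _, hwe⟩ := hmem _ z.2
    exact hwe ▸ w.2
  set emb : ↥M → ↥N := fun z => ⟨(z : E), hMN z⟩ with hemb
  have hinj : Function.Injective emb := by
    intro a b hab
    exact Subtype.ext (congrArg (fun x : ↥N => (x : E)) hab)
  have hcenter : ∀ z : ↥M, emb z ∈ Subgroup.center ↥N := by
    intro z
    obtain ⟨w, hw, hwe⟩ := hmem _ z.2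
    have : emb z = w := Subtype.ext hwe.symm
    rw [this]
    exact hw
  have hembinv : ∀ z : ↥M, (emb z)⁻¹ = emb z⁻¹ := by
    intro z
    exact Subtype.ext rfl
  -- σ acts by the scalar φZ z on central elements
  have hσz : ∀ z : ↥M, σ (emb z) = φZ z • LinearMap.id := by
    intro z
    obtain ⟨μ, hμ⟩ := schur_scalar_s15 σ hσirr (σ (emb z)) (fun g => by
      rw [← Module.End.mul_eq_comp, ← Module.End.mul_eq_comp, ← map_mul, ← map_mul,
        Subgroup.mem_center_iff.mp (hcenter z) g])
    have h1 : χ (emb z) = μ * χ 1 := by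
      rw [hχ1, hχ]
      show LinearMap.trace ℂ W (σ (emb z)) = _
      rw [hμ, map_smul, LinearMap.trace_id, smul_eq_mul]
    have h2 : χ (emb z) = χ 1 * φZ z := hφZ z (hMN z)
    have hμφ : μ = φZ z := by
      apply mul_right_cancel₀ hχ1ne
      rw [← h1, h2, mul_comm]
    rw [hμ, hμφ]
  -- character twisted by central elements
  have hχmul : ∀ (n : ↥N) (z : ↥M), χ (n * emb z) = φZ z * χ n := by
    intro n z
    rw [hχ]
    show LinearMap.trace ℂ W (σ (n * emb z)) = φZ z * LinearMap.trace ℂ W (σ n)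
    rw [map_mul, hσz]
    have : σ n * (φZ z • LinearMap.id) = φZ z • σ n := by
      ext w; simp
    rw [this, map_smul, smul_eq_mul]
  -- ρ acts by nonzero scalars on central elements of E
  have hρscalar : ∀ c : E, c ∈ Subgroup.center E →
      ∃ μ : ℂ, μ ≠ 0 ∧ ρ c = μ • LinearMap.id := by
    intro c hc
    obtain ⟨μ, hμ⟩ := schur_scalar_s15 ρ hρirr (ρ c) (fun g => by
      rw [← Module.End.mul_eq_comp, ← Module.End.mul_eq_comp, ← map_mul, ← map_mul,
        Subgroup.mem_center_iff.mp hc g])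
    refine ⟨μ, ?_, hμ⟩
    intro h0
    obtain ⟨v, hv⟩ := exists_ne (0 : V)
    apply hv
    have : ρ c⁻¹ (ρ c v) = v := by
      rw [← LinearMap.comp_apply, ← Module.End.mul_eq_comp, ← map_mul, inv_mul_cancel,
        map_one]
      rfl
    rw [hμ, h0] at this
    simpa using this.symm
  -- inverse scalar
  have hρinv : ∀ (c : E) (μ : ℂ), μ ≠ 0 → ρ c = μ • LinearMap.id →
      ρ c⁻¹ = μ⁻¹ • LinearMap.id := by
    intro c μ hμ0 hc
    have h1 : ρ c⁻¹ * ρ c = 1 := by rw [← map_mul, inv_mul_cancel, map_one]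
    rw [hc] at h1
    have : μ • ρ c⁻¹ = 1 := by
      rw [← h1]; ext v; simp [mul_comm]
    calc ρ c⁻¹ = μ⁻¹ • (μ • ρ c⁻¹) := by rw [smul_smul, inv_mul_cancel₀ hμ0, one_smul]
    _ = μ⁻¹ • LinearMap.id := by rw [this]; rfl
  -- φ twisted by central scalar action
  have hφmul : ∀ (c g : E) (μ : ℂ), ρ c = μ • LinearMap.id → φ (c * g) = μ * φ g := by
    intro c g μ hc
    rw [hφ]
    show LinearMap.trace ℂ V (ρ (c * g)) = μ * LinearMap.trace ℂ V (ρ g)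
    rw [map_mul, hc]
    have : (μ • LinearMap.id) * ρ g = μ • ρ g := by ext v; simp
    rw [this, map_smul, smul_eq_mul]
  -- key: φZ z equals the scalar by which ρ acts
  have hkey : ∀ (z : ↥M) (μ : ℂ), μ ≠ 0 → ρ (z : E) = μ • LinearMap.id → φZ z = μ := by
    intro z μ hμ0 hρz
    set S := ∑ n : ↥N, χ n * φ ((n⁻¹ : ↥N) : E) with hS
    have hSne : S ≠ 0 := by
      intro h
      exact hconst (by rw [h, mul_zero])
    have step1 : S = ∑ n : ↥N, χ (n * emb z) * φ (((n * emb z)⁻¹ : ↥N) : E) := by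
      rw [hS]
      exact (Fintype.sum_equiv (Equiv.mulRight (emb z))
        (fun n => χ (n * emb z) * φ (((n * emb z)⁻¹ : ↥N) : E))
        (fun n => χ n * φ ((n⁻¹ : ↥N) : E)) (fun n => rfl)).symm
    have hre : S = (φZ z * μ⁻¹) * S :=
      calc S = ∑ n : ↥N, χ (n * emb z) * φ (((n * emb z)⁻¹ : ↥N) : E) := step1
      _ = ∑ n : ↥N, (φZ z * μ⁻¹) * (χ n * φ ((n⁻¹ : ↥N) : E)) := by
        refine Finset.sum_congr rfl fun n _ => ?_
        have e1 : ((n * emb z)⁻¹ : ↥N) = (emb z)⁻¹ * n⁻¹ := by rw [mul_inv_rev]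
        have e2 : (((emb z)⁻¹ * n⁻¹ : ↥N) : E) = ((z : E))⁻¹ * ((n⁻¹ : ↥N) : E) := by
          push_cast
          rfl
        rw [hχmul, e1, e2, hφmul _ _ _ (hρinv _ _ hμ0 hρz)]
        ring
      _ = (φZ z * μ⁻¹) * S := by rw [hS, Finset.mul_sum]
    have h1 : φZ z * μ⁻¹ = 1 := by
      have := hre
      nth_rewrite 1 [← one_mul S] at this
      exact (mul_right_cancel₀ hSne this).symm
    field_simp at h1
    exact h1
  -- χ vanishes off the center of N
  have hχvanish : ∀ n : ↥N, n ∉ Subgroup.center ↥N → χ n = 0 := by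
    intro n hn
    rw [Subgroup.mem_center_iff] at hn
    push_neg at hn
    obtain ⟨h, hcomm⟩ := hn
    set c : ↥N := n⁻¹ * h * n * h⁻¹ with hc
    have hcel : (c : E) ∈ Subgroup.center E := by
      apply hE
      open scoped commutatorElement in
      have : (c : E) = ⁅((n : E))⁻¹, (h : E)⁆ := by
        rw [hc, commutatorElement_def]
        push_cast
        group
      rw [this]
      exact Subgroup.commutator_mem_commutator (Subgroup.mem_top _) (Subgroup.mem_top _)
    have hc1 : c ≠ 1 := by
      intro h1
      apply hcomm
      have h2 : n⁻¹ * h * n = h := by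
        have := h1
        rw [hc, mul_inv_eq_one] at this
        exact this
      calc h * n = n * (n⁻¹ * h * n) := by group
      _ = n * h := by rw [h2]
    have hcc : c ∈ Subgroup.center ↥N := by
      rw [Subgroup.mem_center_iff]
      intro g
      have := Subgroup.mem_center_iff.mp hcel (g : E)
      exact Subtype.ext this
    have hcM : (c : E) ∈ M := by
      rw [hM]
      exact ⟨c, hcc, rfl⟩
    set cM : ↥M := ⟨(c : E), hcM⟩ with hcMdef
    have hembc : emb cM = c := Subtype.ext rfl
    obtain ⟨μ, hμ0, hρc⟩ := hρscalar (c : E) hcel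
    have hμ1 : μ ≠ 1 := by
      intro h1
      apply hc1
      have : ρ (c : E) = ρ (1 : E) := by
        rw [hρc, h1, one_smul, map_one]
        rfl
      have hce : (c : E) = 1 := hρfaith this
      exact Subtype.ext hce
    have hφZc : φZ cM = μ := hkey cM μ hμ0 hρc
    have hχnc := hχmul n cM
    rw [hembc, hφZc] at hχnc
    have hcls : χ (n * c) = χ n := by
      have e1 : n * c = h * (n * h⁻¹) := by rw [hc]; group
      have e2 : (n * h⁻¹) * h = n := by group
      rw [hχ]
      show LinearMap.trace ℂ W (σ (n * c)) = LinearMap.trace ℂ W (σ n)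
      rw [e1, map_mul, LinearMap.trace_mul_comm, ← map_mul, e2]
    rw [hcls] at hχnc
    by_contra hne
    apply hμ1
    nth_rewrite 1 [← one_mul (χ n)] at hχnc
    exact (mul_right_cancel₀ hne hχnc).symm
  -- rewrite the sum over N as a sum over M
  have hsum : (∑ n : ↥N, χ n⁻¹ • (ρ (n : E) : V →ₗ[ℂ] V))
      = χ 1 • ∑ z : ↥M, φZ z⁻¹ • (ρ (z : E) : V →ₗ[ℂ] V) := by
    have hvan : ∀ x ∈ (Finset.univ : Finset ↥N),
        x ∉ Finset.univ.map ⟨emb, hinj⟩ → χ x⁻¹ • (ρ (x : E) : V →ₗ[ℂ] V) = 0 := by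
      intro x _ hx
      have hxM : (x : E) ∉ M := by
        intro hxm
        apply hx
        rw [Finset.mem_map]
        exact ⟨⟨(x : E), hxm⟩, Finset.mem_univ _, Subtype.ext rfl⟩
      have hxc : x⁻¹ ∉ Subgroup.center ↥N := by
        intro hxc
        apply hxM
        rw [hM]
        exact ⟨x, by simpa using (Subgroup.center ↥N).inv_mem hxc, rfl⟩
      rw [hχvanish _ hxc, zero_smul]
    calc (∑ n : ↥N, χ n⁻¹ • (ρ (n : E) : V →ₗ[ℂ] V))
        = ∑ n ∈ Finset.univ.map ⟨emb, hinj⟩, χ n⁻¹ • (ρ (n : E) : V →ₗ[ℂ] V) :=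
          (Finset.sum_subset (Finset.subset_univ _) hvan).symm
      _ = ∑ z : ↥M, χ (emb z)⁻¹ • (ρ ((emb z : ↥N) : E) : V →ₗ[ℂ] V) := Finset.sum_map _ _ _
      _ = χ 1 • ∑ z : ↥M, φZ z⁻¹ • (ρ (z : E) : V →ₗ[ℂ] V) := by
          rw [Finset.smul_sum]
          refine Finset.sum_congr rfl fun z _ => ?_
          rw [hembinv z]
          have : χ (emb z⁻¹) = χ 1 * φZ z⁻¹ := hφZ z⁻¹ (hMN z⁻¹)
          rw [this, mul_smul]
    -- done
  -- conclude
  have hcardN : (Fintype.card ↥N : ℂ) ≠ 0 := Nat.cast_ne_zero.mpr Fintype.card_pos.ne'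
  have hcardM : (Fintype.card ↥M : ℂ) ≠ 0 := Nat.cast_ne_zero.mpr Fintype.card_pos.ne'
  rw [heχ, heφZ, hsum, smul_smul]
  have hco : χ 1 / (Fintype.card ↥N : ℂ) * χ 1
      = (χ 1 * χ 1 * (Fintype.card ↥M : ℂ) / (Fintype.card ↥N : ℂ))
        * (Fintype.card ↥M : ℂ)⁻¹ := by
    field_simp
  rw [hco, ← smul_smul]
  exact LinearMap.range_smul _ _
    (div_ne_zero (mul_ne_zero (mul_ne_zero hχ1ne hχ1ne) hcardM) hcardN)
end
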